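/- The sum of 1/(a²b²) over all pairs (a,b) of coprime positive integers of opposite parity (i.e. a + b odd) equals 1. -/

import Mathlib

open Real Set Function

noncomputable def Fab : ℕ × ℕ → ℝ := fun p => 1 / ((p.1 : ℝ) ^ 2 * (p.2 : ℝ) ^ 2)

lemma Fab_nonneg (p : ℕ × ℕ) : 0 ≤ Fab p := by
  unfold Fab; positivity

lemma heven_pow {k : ℕ} {c : ℝ} (h : HasSum (fun n : ℕ => 1 / (n:ℝ)^k) c) :
    HasSum (Set.indicator {n : ℕ | Even n} (fun n : ℕ => 1 / (n:ℝ)^k)) (((2:ℝ)^k)⁻¹ * c) := by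
  have h2 := h.mul_left (((2:ℝ)^k)⁻¹)
  have hinj : Function.Injective (fun n : ℕ => 2 * n) := fun a b h => by dsimp at h; omega
  rw [← Function.Injective.hasSum_iff hinj (fun x hx => by
    have hxE : x ∉ {n : ℕ | Even n} := fun hmem => hx (by
      obtain ⟨m, hm⟩ := hmem; exact ⟨m, by dsimp; omega⟩)
    exact Set.indicator_of_notMem hxE _)]
  convert h2 using 1
  · rfl
  funext n
  have hmem : (2 * n) ∈ {n : ℕ | Even n} := ⟨n, by ring⟩
  show Set.indicator {n : ℕ | Even n} (fun n : ℕ => 1 / (n:ℝ)^k) (2 * n) = _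
  rw [Set.indicator_of_mem hmem]
  push_cast
  rw [mul_pow, one_div, one_div, mul_inv]

lemma hodd_pow {k : ℕ} {c : ℝ} (h : HasSum (fun n : ℕ => 1 / (n:ℝ)^k) c) :
    HasSum (Set.indicator {n : ℕ | Odd n} (fun n : ℕ => 1 / (n:ℝ)^k)) (c - ((2:ℝ)^k)⁻¹ * c) := by
  have he := heven_pow h
  have hsub := h.sub he
  convert hsub using 1
  · rfl
  funext n
  by_cases hn : Even n
  · rw [Set.indicator_of_notMem (show n ∉ {n : ℕ | Odd n} from fun hm => (Nat.not_odd_iff_even.mpr hn) hm) _,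
        Set.indicator_of_mem (show n ∈ {n : ℕ | Even n} from hn)]
    simp
  · rw [Set.indicator_of_mem (show n ∈ {n : ℕ | Odd n} from Nat.not_even_iff_odd.mp hn),
        Set.indicator_of_notMem (show n ∉ {n : ℕ | Even n} from hn)]
    simp

lemma hodd2 : HasSum (Set.indicator {n : ℕ | Odd n} (fun n : ℕ => 1 / (n:ℝ)^2)) (π^2/8) := by
  have h := hodd_pow hasSum_zeta_two
  convert h using 1
  norm_num
  ring

lemma hodd4 : HasSum (Set.indicator {n : ℕ | Odd n} (fun n : ℕ => 1 / (n:ℝ)^4)) (π^4/96) := by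
  have h := hodd_pow hasSum_zeta_four
  convert h using 1
  norm_num
  ring

lemma hFab_all : HasSum Fab (π^4/36) := by
  have hnn : (0 : ℕ → ℝ) ≤ (fun n : ℕ => 1/(n:ℝ)^2) := fun n => by positivity
  have hs : Summable (fun p : ℕ × ℕ => (1/(p.1:ℝ)^2) * (1/(p.2:ℝ)^2)) :=
    Summable.mul_of_nonneg (f := fun n : ℕ => 1/(n:ℝ)^2) (g := fun n : ℕ => 1/(n:ℝ)^2)
      hasSum_zeta_two.summable hasSum_zeta_two.summable hnn hnn
  have h := hasSum_zeta_two.mul hasSum_zeta_two hs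
  convert h using 1
  · rfl
  · funext p
    simp only [Fab]
    rw [div_mul_div_comm, one_mul]
  · ring

def Cop : Set (ℕ × ℕ) := {p | 0 < p.1 ∧ 0 < p.2 ∧ Nat.Coprime p.1 p.2}

lemma hCop : HasSum (Fab ∘ ((↑) : ↥Cop → ℕ × ℕ)) (5/2) := by
  have hSum : Summable Fab := hFab_all.summable
  have hsub : Summable (Fab ∘ ((↑) : ↥Cop → ℕ × ℕ)) := hSum.subtype _
  have hc := hsub.hasSum
  have hd : HasSum (fun d : {d : ℕ // 0 < d} => 1 / (d:ℝ)^4) (π^4/90) := by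
    have h4 := hasSum_zeta_four
    rw [← hasSum_subtype_iff_of_support_subset (s := {d : ℕ | 0 < d}) (fun x hx => by
      simp only [Function.mem_support] at hx
      rcases Nat.eq_zero_or_pos x with h | h
      · exfalso; apply hx; simp [h]
      · exact h)] at h4
    exact h4
  have hmul : Summable (fun x : {d : ℕ // 0 < d} × ↥Cop =>
      (fun d : {d : ℕ // 0 < d} => 1/(d:ℝ)^4) x.1 * (Fab ∘ ((↑) : ↥Cop → ℕ × ℕ)) x.2) :=
    Summable.mul_of_nonneg (f := fun d : {d : ℕ // 0 < d} => 1/(d:ℝ)^4)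
      (g := Fab ∘ ((↑) : ↥Cop → ℕ × ℕ)) hd.summable hsub
      (fun d => by positivity) (fun c => Fab_nonneg _)
  have hprod := hd.mul hc hmul
  set G : {d : ℕ // 0 < d} × ↥Cop → ℕ × ℕ :=
    fun x => (x.1.1 * x.2.1.1, x.1.1 * x.2.1.2) with hGdef
  have hGinj : Function.Injective G := by
    rintro ⟨⟨d, hd0⟩, ⟨⟨a, b⟩, ha, hb, hab⟩⟩ ⟨⟨e, he0⟩, ⟨⟨a', b'⟩, ha', hb', hab'⟩⟩ hxy
    simp only [hGdef, Prod.mk.injEq] at hxy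
    obtain ⟨h1, h2⟩ := hxy
    have hde : d = e := by
      have g1 : Nat.gcd (d * a) (d * b) = d := by
        rw [Nat.gcd_mul_left, Nat.Coprime.gcd_eq_one hab, mul_one]
      have g2 : Nat.gcd (e * a') (e * b') = e := by
        rw [Nat.gcd_mul_left, Nat.Coprime.gcd_eq_one hab', mul_one]
      rw [h1, h2, g2] at g1
      exact g1.symm
    subst hde
    have haa : a = a' := Nat.eq_of_mul_eq_mul_left hd0 h1
    have hbb : b = b' := Nat.eq_of_mul_eq_mul_left hd0 h2
    subst haa; subst hbb
    rfl
  have hvan : ∀ p ∉ Set.range G, Fab p = 0 := by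
    intro p hp
    by_contra hFp
    apply hp
    have hm : p.1 ≠ 0 := by rintro h0; apply hFp; simp [Fab, h0]
    have hn : p.2 ≠ 0 := by rintro h0; apply hFp; simp [Fab, h0]
    have hg : 0 < Nat.gcd p.1 p.2 := Nat.gcd_pos_of_pos_left _ (Nat.pos_of_ne_zero hm)
    refine ⟨⟨⟨Nat.gcd p.1 p.2, hg⟩, ⟨(p.1 / Nat.gcd p.1 p.2, p.2 / Nat.gcd p.1 p.2),
      Nat.div_pos (Nat.le_of_dvd (Nat.pos_of_ne_zero hm) (Nat.gcd_dvd_left _ _)) hg,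
      Nat.div_pos (Nat.le_of_dvd (Nat.pos_of_ne_zero hn) (Nat.gcd_dvd_right _ _)) hg,
      Nat.coprime_div_gcd_div_gcd hg⟩⟩, ?_⟩
    simp only [hGdef]
    rw [Nat.mul_div_cancel' (Nat.gcd_dvd_left _ _), Nat.mul_div_cancel' (Nat.gcd_dvd_right _ _)]
  have hcomp : (Fab ∘ G) = fun x : {d : ℕ // 0 < d} × ↥Cop =>
      (fun d : {d : ℕ // 0 < d} => 1/(d:ℝ)^4) x.1 * (Fab ∘ ((↑) : ↥Cop → ℕ × ℕ)) x.2 := by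
    funext x
    simp only [Function.comp_apply, hGdef, Fab]
    push_cast
    rw [div_mul_div_comm, one_mul]
    congr 1
    ring
  have h36 : HasSum (Fab ∘ G) (π^4/36) :=
    (Function.Injective.hasSum_iff hGinj hvan).mpr hFab_all
  rw [← hcomp] at hprod
  have heq := hprod.unique h36
  have hπ : (π:ℝ)^4 ≠ 0 := pow_ne_zero _ pi_ne_zero
  have key : ∑' (b : ↥Cop), (Fab ∘ ((↑) : ↥Cop → ℕ × ℕ)) b = 5/2 :=
    mul_left_cancel₀ hπ (by linear_combination 90 * heq)
  rwa [key] at hc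

def CopO : Set (ℕ × ℕ) := {p | 0 < p.1 ∧ 0 < p.2 ∧ Nat.Coprime p.1 p.2 ∧ Odd p.1 ∧ Odd p.2}

noncomputable def FO : ℕ × ℕ → ℝ := Set.indicator {p : ℕ × ℕ | Odd p.1 ∧ Odd p.2} Fab

lemma FO_nonneg (p : ℕ × ℕ) : 0 ≤ FO p :=
  Set.indicator_nonneg (fun a _ => Fab_nonneg a) p

lemma hFO : HasSum FO (π^4/64) := by
  have hmul : Summable (fun x : ℕ × ℕ =>
      Set.indicator {n : ℕ | Odd n} (fun n : ℕ => 1 / (n:ℝ)^2) x.1 *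
      Set.indicator {n : ℕ | Odd n} (fun n : ℕ => 1 / (n:ℝ)^2) x.2) :=
    Summable.mul_of_nonneg (f := Set.indicator {n : ℕ | Odd n} (fun n : ℕ => 1 / (n:ℝ)^2))
      (g := Set.indicator {n : ℕ | Odd n} (fun n : ℕ => 1 / (n:ℝ)^2))
      hodd2.summable hodd2.summable
      (fun d => Set.indicator_nonneg (fun a _ => by positivity) d)
      (fun d => Set.indicator_nonneg (fun a _ => by positivity) d)
  have h := hodd2.mul hodd2 hmul
  convert h using 1
  · rfl
  · funext p
    by_cases h1 : Odd p.1 <;> by_cases h2 : Odd p.2 <;>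
      simp [FO, Fab, Set.indicator_apply, Set.mem_setOf_eq, h1, h2, div_mul_div_comm, mul_comm]
  · ring

lemma hdO : HasSum ((fun n : ℕ => 1 / (n:ℝ)^4) ∘ ((↑) : ↥{n : ℕ | Odd n} → ℕ)) (π^4/96) :=
  hasSum_subtype_iff_indicator.mpr hodd4

lemma odd_of_dvd_odd {d n : ℕ} (h : d ∣ n) (hn : Odd n) : Odd d := by
  rcases Nat.even_or_odd d with he | ho
  · exfalso
    have : Even n := (even_iff_two_dvd.mpr ((even_iff_two_dvd.mp he).trans h))
    exact (Nat.not_even_iff_odd.mpr hn) this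
  · exact ho

lemma hCopO : HasSum (Fab ∘ ((↑) : ↥CopO → ℕ × ℕ)) (3/2) := by
  have hsub : Summable (FO ∘ ((↑) : ↥CopO → ℕ × ℕ)) := hFO.summable.subtype _
  have hc := hsub.hasSum
  have hmul : Summable (fun x : ↥{n : ℕ | Odd n} × ↥CopO =>
      ((fun n : ℕ => 1 / (n:ℝ)^4) ∘ ((↑) : ↥{n : ℕ | Odd n} → ℕ)) x.1 *
      (FO ∘ ((↑) : ↥CopO → ℕ × ℕ)) x.2) :=
    Summable.mul_of_nonneg (f := (fun n : ℕ => 1 / (n:ℝ)^4) ∘ ((↑) : ↥{n : ℕ | Odd n} → ℕ))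
      (g := FO ∘ ((↑) : ↥CopO → ℕ × ℕ)) hdO.summable hsub
      (fun d => by simp only [Function.comp_apply]; positivity) (fun c => FO_nonneg _)
  have hprod := hdO.mul hc hmul
  set G : ↥{n : ℕ | Odd n} × ↥CopO → ℕ × ℕ :=
    fun x => (x.1.1 * x.2.1.1, x.1.1 * x.2.1.2) with hGdef
  have hGinj : Function.Injective G := by
    rintro ⟨⟨d, hd0⟩, ⟨⟨a, b⟩, ha, hb, hab, hoa, hob⟩⟩
      ⟨⟨e, he0⟩, ⟨⟨a', b'⟩, ha', hb', hab', hoa', hob'⟩⟩ hxy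
    simp only [hGdef, Prod.mk.injEq] at hxy
    obtain ⟨h1, h2⟩ := hxy
    have hdpos : 0 < d := by
      have := Nat.odd_iff.mp hd0; omega
    have hde : d = e := by
      have g1 : Nat.gcd (d * a) (d * b) = d := by
        rw [Nat.gcd_mul_left, Nat.Coprime.gcd_eq_one hab, mul_one]
      have g2 : Nat.gcd (e * a') (e * b') = e := by
        rw [Nat.gcd_mul_left, Nat.Coprime.gcd_eq_one hab', mul_one]
      rw [h1, h2, g2] at g1
      exact g1.symm
    subst hde
    have haa : a = a' := Nat.eq_of_mul_eq_mul_left hdpos h1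
    have hbb : b = b' := Nat.eq_of_mul_eq_mul_left hdpos h2
    subst haa; subst hbb
    rfl
  have hvan : ∀ p ∉ Set.range G, FO p = 0 := by
    intro p hp
    by_contra hFp
    apply hp
    have hmem : p ∈ {p : ℕ × ℕ | Odd p.1 ∧ Odd p.2} := by
      by_contra h
      exact hFp (Set.indicator_of_notMem h _)
    obtain ⟨ho1, ho2⟩ := hmem
    have hm : 0 < p.1 := by have := Nat.odd_iff.mp ho1; omega
    have hn : 0 < p.2 := by have := Nat.odd_iff.mp ho2; omega
    have hg : 0 < Nat.gcd p.1 p.2 := Nat.gcd_pos_of_pos_left _ hm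
    have hogcd : Odd (Nat.gcd p.1 p.2) := odd_of_dvd_odd (Nat.gcd_dvd_left _ _) ho1
    have hq1 : Odd (p.1 / Nat.gcd p.1 p.2) := by
      have heq := Nat.mul_div_cancel' (Nat.gcd_dvd_left p.1 p.2)
      rw [← heq] at ho1
      exact (Nat.odd_mul.mp ho1).2
    have hq2 : Odd (p.2 / Nat.gcd p.1 p.2) := by
      have heq := Nat.mul_div_cancel' (Nat.gcd_dvd_right p.1 p.2)
      rw [← heq] at ho2
      exact (Nat.odd_mul.mp ho2).2
    refine ⟨⟨⟨Nat.gcd p.1 p.2, hogcd⟩, ⟨(p.1 / Nat.gcd p.1 p.2, p.2 / Nat.gcd p.1 p.2),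
      Nat.div_pos (Nat.le_of_dvd hm (Nat.gcd_dvd_left _ _)) hg,
      Nat.div_pos (Nat.le_of_dvd hn (Nat.gcd_dvd_right _ _)) hg,
      Nat.coprime_div_gcd_div_gcd hg, hq1, hq2⟩⟩, ?_⟩
    simp only [hGdef]
    rw [Nat.mul_div_cancel' (Nat.gcd_dvd_left _ _), Nat.mul_div_cancel' (Nat.gcd_dvd_right _ _)]
  have hcomp : (FO ∘ G) = fun x : ↥{n : ℕ | Odd n} × ↥CopO =>
      ((fun n : ℕ => 1 / (n:ℝ)^4) ∘ ((↑) : ↥{n : ℕ | Odd n} → ℕ)) x.1 *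
      (FO ∘ ((↑) : ↥CopO → ℕ × ℕ)) x.2 := by
    funext x
    obtain ⟨⟨d, hd0⟩, ⟨⟨a, b⟩, ha, hb, hab, hoa, hob⟩⟩ := x
    have hm1 : ((d * a, d * b) : ℕ × ℕ) ∈ {p : ℕ × ℕ | Odd p.1 ∧ Odd p.2} :=
      ⟨Nat.odd_mul.mpr ⟨hd0, hoa⟩, Nat.odd_mul.mpr ⟨hd0, hob⟩⟩
    have hm2 : ((a, b) : ℕ × ℕ) ∈ {p : ℕ × ℕ | Odd p.1 ∧ Odd p.2} := ⟨hoa, hob⟩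
    simp only [Function.comp_apply, hGdef, FO]
    rw [Set.indicator_of_mem hm1, Set.indicator_of_mem hm2]
    simp only [Fab]
    push_cast
    rw [div_mul_div_comm, one_mul]
    congr 1
    ring
  have h64 : HasSum (FO ∘ G) (π^4/64) :=
    (Function.Injective.hasSum_iff hGinj hvan).mpr hFO
  rw [← hcomp] at hprod
  have heq := hprod.unique h64
  have hπ : (π:ℝ)^4 ≠ 0 := pow_ne_zero _ pi_ne_zero
  have key : ∑' (b : ↥CopO), (FO ∘ ((↑) : ↥CopO → ℕ × ℕ)) b = 3/2 :=
    mul_left_cancel₀ hπ (by linear_combination 96 * heq)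
  rw [key] at hc
  have hfun : (FO ∘ ((↑) : ↥CopO → ℕ × ℕ)) = (Fab ∘ ((↑) : ↥CopO → ℕ × ℕ)) := by
    funext c
    obtain ⟨⟨a, b⟩, ha, hb, hab, hoa, hob⟩ := c
    simp only [Function.comp_apply, FO]
    exact Set.indicator_of_mem (show ((a,b) : ℕ × ℕ) ∈ {p : ℕ × ℕ | Odd p.1 ∧ Odd p.2} from ⟨hoa, hob⟩) _
  rwa [hfun] at hc

def Mix : Set (ℕ × ℕ) := {p | 0 < p.1 ∧ 0 < p.2 ∧ Nat.Coprime p.1 p.2 ∧ Odd (p.1 + p.2)}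

lemma hMix_ind : HasSum (Set.indicator Mix Fab) 1 := by
  have hCop_ind : HasSum (Set.indicator Cop Fab) (5/2) := hasSum_subtype_iff_indicator.mp hCop
  have hCopO_ind : HasSum (Set.indicator CopO Fab) (3/2) := hasSum_subtype_iff_indicator.mp hCopO
  have h := hCop_ind.sub hCopO_ind
  convert h using 1
  · rfl
  · funext p
    by_cases hp : p ∈ Cop
    · obtain ⟨h1, h2, h3⟩ := hp
      by_cases ho : Odd (p.1 + p.2)
      · have hM : p ∈ Mix := ⟨h1, h2, h3, ho⟩
        have hO : p ∉ CopO := by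
          rintro ⟨_, _, _, ho1, ho2⟩
          exact (Nat.not_odd_iff_even.mpr (ho1.add_odd ho2)) ho
        rw [Set.indicator_of_mem hM,
            Set.indicator_of_mem (show p ∈ Cop from ⟨h1, h2, h3⟩),
            Set.indicator_of_notMem hO]
        simp
      · have ho1 : Odd p.1 ∧ Odd p.2 := by
          have hne : ¬ (2 ∣ p.1 ∧ 2 ∣ p.2) := by
            rintro ⟨d1, d2⟩
            have hdg : (2 : ℕ) ∣ Nat.gcd p.1 p.2 := Nat.dvd_gcd d1 d2
            rw [Nat.Coprime.gcd_eq_one h3] at hdg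
            omega
          have hs : ¬ (p.1 + p.2) % 2 = 1 := by rwa [← Nat.odd_iff]
          rw [Nat.odd_iff, Nat.odd_iff]
          omega
        have hO : p ∈ CopO := ⟨h1, h2, h3, ho1.1, ho1.2⟩
        rw [Set.indicator_of_notMem (show p ∉ Mix from fun hm => ho hm.2.2.2),
            Set.indicator_of_mem (show p ∈ Cop from ⟨h1, h2, h3⟩),
            Set.indicator_of_mem hO]
        simp
    · have hM : p ∉ Mix := fun hm => hp ⟨hm.1, hm.2.1, hm.2.2.1⟩
      have hO : p ∉ CopO := fun hm => hp ⟨hm.1, hm.2.1, hm.2.2.1⟩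
      rw [Set.indicator_of_notMem hM, Set.indicator_of_notMem hp,
          Set.indicator_of_notMem hO]
      simp
  · norm_num


/-- The sum of `1/(a²b²)` over all pairs of coprime positive integers
`(a,b)` of opposite parity (`a + b` odd) equals `1`. -/
theorem tsum_coprime_mixed_parity_inv_sq_sq :
    ∑' p : {p : ℕ × ℕ // 0 < p.1 ∧ 0 < p.2 ∧ Nat.Coprime p.1 p.2 ∧ Odd (p.1 + p.2)},
      (1 : ℝ) / ((p.val.1 : ℝ) ^ 2 * (p.val.2 : ℝ) ^ 2) = 1 := by
  have h : HasSum (Fab ∘ ((↑) : ↥Mix → ℕ × ℕ)) 1 := hasSum_subtype_iff_indicator.mpr hMix_ind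
  exact h.tsum_eq
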